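/- The Stefan-Neumann potential E(ξ̄) = -∑_{i=0}^{n-1} kᵢ(u_{i+1}-uᵢ) ln(F(ξᵢ/aᵢ) - F(ξ_{i+1}/aᵢ)) + kₙ aₙ b_N √π F(ξₙ/aₙ) + (1/4)∑_{i=1}^{n} dᵢξᵢ² is strictly convex on the closed-type cone Ω̄ = {ξ̄ ∈ ℝⁿ : ξ₁ > ⋯ > ξₙ ≥ 0}, and every sub-level set {ξ̄ ∈ Ω̄ : E(ξ̄) ≤ c}, c ∈ ℝ, is compact; hence E attains its minimum on Ω̄ at a unique point. -/

import Mathlib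

noncomputable def F (ξ : ℝ) : ℝ :=
  (1 / Real.sqrt Real.pi) * ∫ s in (0:ℝ)..ξ, Real.exp (-s ^ 2 / 4)

/-- Extension of `ξ = (ξ₁, …, ξₙ)` to indices `0, …, n+1` (value at `0` irrelevant,
there the convention `F(ξ₀/a₀) = 1` is used). -/
def ext (n : ℕ) (ξ : Fin n → ℝ) : ℕ → ℝ :=
  fun i => if h : 1 ≤ i ∧ i ≤ n then ξ ⟨i - 1, by omega⟩ else 0

/-- The Stefan–Neumann potential
`E(ξ̄) = -∑_{i=0}^{n-1} kᵢ(u_{i+1}-uᵢ) ln(F(ξᵢ/aᵢ) - F(ξ_{i+1}/aᵢ))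
  + kₙaₙb_N√π F(ξₙ/aₙ) + (1/4)∑_{i=1}^n dᵢξᵢ²`, with `F(ξ₀/a₀) = 1`. -/
noncomputable def ENeu (n : ℕ) (u k a d : ℕ → ℝ) (bN : ℝ) (ξ : Fin n → ℝ) : ℝ :=
  (∑ i ∈ Finset.range n,
    -(k i * (u (i + 1) - u i) *
      Real.log ((if i = 0 then 1 else F (ext n ξ i / a i)) - F (ext n ξ (i + 1) / a i))))
  + k n * a n * bN * Real.sqrt Real.pi * F (ext n ξ n / a n)
  + (1 / 4) * ∑ i ∈ Finset.Icc 1 n, d i * (ext n ξ i) ^ 2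

/-- The cone `Ω̄ = {ξ₁ > ⋯ > ξₙ ≥ 0}`. -/
def OmegaBar (n : ℕ) : Set (Fin n → ℝ) := {ξ | StrictAnti ξ ∧ ∀ i, 0 ≤ ξ i}


open Real MeasureTheory Set Filter intervalIntegral Topology

noncomputable def phi (s : ℝ) : ℝ := Real.exp (-s ^ 2 / 4)

lemma phi_pos (s : ℝ) : 0 < phi s := Real.exp_pos _

lemma phi_eq : phi = fun s : ℝ => Real.exp (-(1/4) * s ^ 2) := by
  funext s; simp only [phi]; ring_nf

lemma phi_cont : Continuous phi := by
  unfold phi; fun_prop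

lemma hasDerivAt_phi (s : ℝ) : HasDerivAt phi (-(s/2) * phi s) s := by
  have h : HasDerivAt (fun s : ℝ => -s ^ 2 / 4) (-(s/2)) s := by
    have := ((hasDerivAt_pow 2 s).neg.div_const 4)
    rw [show -(s/2) = -(((2:ℕ):ℝ) * s ^ (2 - 1)) / 4 by push_cast; ring]
    exact this
  have := h.exp
  unfold phi; simpa [mul_comm] using this

lemma phi_intble (a b : ℝ) : IntervalIntegrable phi volume a b :=
  phi_cont.intervalIntegrable a b

lemma phi_integrable : Integrable phi := by
  rw [phi_eq]; exact integrable_exp_neg_mul_sq (by norm_num)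

lemma sphi_integrable : Integrable (fun s : ℝ => s/2 * phi s) := by
  have := (integrable_mul_exp_neg_mul_sq (b := 1/4) (by norm_num)).div_const 2
  rw [phi_eq]
  convert this using 2 with s
  ring

lemma sqrtpi_pos : 0 < Real.sqrt π := Real.sqrt_pos.2 Real.pi_pos

lemma F_eq (x : ℝ) : F x = (Real.sqrt π)⁻¹ * ∫ s in (0:ℝ)..x, phi s := by
  rw [F, one_div]; rfl

lemma F_sub (x y : ℝ) : F x - F y = (Real.sqrt π)⁻¹ * ∫ s in y..x, phi s := by
  rw [F_eq, F_eq, ← mul_sub]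
  congr 1
  rw [← intervalIntegral.integral_add_adjacent_intervals (b := y) (phi_intble 0 y) (phi_intble y x)]
  ring

lemma hasDerivAt_F (x : ℝ) : HasDerivAt F ((Real.sqrt π)⁻¹ * phi x) x := by
  have h : HasDerivAt (fun u => ∫ s in (0:ℝ)..u, phi s) (phi x) x :=
    intervalIntegral.integral_hasDerivAt_right (phi_intble 0 x)
      (phi_cont.stronglyMeasurableAtFilter _ _) phi_cont.continuousAt
  have := h.const_mul ((Real.sqrt π)⁻¹)
  rw [show F = fun y => (Real.sqrt π)⁻¹ * ∫ s in (0:ℝ)..y, phi s from funext F_eq]; exact this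

lemma F_continuous : Continuous F :=
  continuous_iff_continuousAt.2 fun x => (hasDerivAt_F x).continuousAt

lemma F_strictMono : StrictMono F := by
  intro y x hyx
  have h : 0 < ∫ s in y..x, phi s :=
    intervalIntegral_pos_of_pos_on (phi_intble y x) (fun s _ => phi_pos s) hyx
  have := mul_pos (inv_pos.2 sqrtpi_pos) h
  rw [← F_sub] at this; linarith

lemma F_zero : F 0 = 0 := by simp [F]

lemma F_nonneg {x : ℝ} (hx : 0 ≤ x) : 0 ≤ F x := by
  rcases eq_or_lt_of_le hx with h | h
  · simp [← h, F_zero]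
  · exact le_of_lt (F_zero ▸ F_strictMono h)

lemma phi_tendsto : Tendsto phi atTop (𝓝 0) := by
  rw [phi_eq]
  have h1 : Tendsto (fun s : ℝ => -(1/4) * s ^ 2) atTop atBot := by
    apply Tendsto.const_mul_atTop_of_neg (by norm_num : (-(1/4) : ℝ) < 0)
    exact tendsto_pow_atTop (by norm_num)
  exact Real.tendsto_exp_atBot.comp h1

lemma integral_sphi_Ioi (X : ℝ) : ∫ s in Ioi X, s/2 * phi s = phi X := by
  have h := integral_Ioi_of_hasDerivAt_of_tendsto' (f := fun s => -phi s)
    (f' := fun s => s/2 * phi s) (a := X)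
    (fun x _ => by have := (hasDerivAt_phi x).neg; rw [show -(-(x/2) * phi x) = x/2 * phi x by ring] at this; exact this)
    (sphi_integrable.integrableOn)
    (by simpa using phi_tendsto.neg)
  simpa using h

lemma integral_phi_total : ∫ s in Ioi (0:ℝ), phi s = Real.sqrt π := by
  rw [phi_eq]
  rw [integral_gaussian_Ioi]
  rw [show π / (1/4) = 4 * π by ring, show (4:ℝ) * π = 2^2 * π by norm_num,
    Real.sqrt_mul (by positivity), Real.sqrt_sq (by norm_num)]
  ring

lemma split_Ioi {f : ℝ → ℝ} (hf : Integrable f) {x y : ℝ} (h : x ≤ y) :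
    ∫ s in Ioi x, f s = (∫ s in x..y, f s) + ∫ s in Ioi y, f s := by
  rw [← Ioc_union_Ioi_eq_Ioi h,
    setIntegral_union (Ioc_disjoint_Ioi le_rfl) measurableSet_Ioi
      (hf.integrableOn) (hf.integrableOn),
    intervalIntegral.integral_of_le h]

lemma integral_phi_Ioi_pos (x : ℝ) : 0 < ∫ s in Ioi x, phi s := by
  rw [split_Ioi phi_integrable (show x ≤ x + 1 by linarith)]
  have h1 : 0 < ∫ s in x..(x+1), phi s :=
    intervalIntegral_pos_of_pos_on (phi_intble _ _) (fun s _ => phi_pos s) (by linarith)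
  have h2 : 0 ≤ ∫ s in Ioi (x+1), phi s :=
    setIntegral_nonneg measurableSet_Ioi fun s _ => (phi_pos s).le
  linarith

lemma F_lt_one (x : ℝ) : F x < 1 := by
  rcases le_or_gt x 0 with h | h
  · have h0 : F x ≤ F 0 := by
      rcases eq_or_lt_of_le h with h' | h'
      · exact le_of_eq (by rw [h'])
      · exact (F_strictMono h').le
    rw [F_zero] at h0; linarith
  · have : F x = (Real.sqrt π)⁻¹ * (Real.sqrt π - ∫ s in Ioi x, phi s) := by
      rw [F_eq]; congr 1
      rw [← integral_phi_total, split_Ioi phi_integrable h.le]; ring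
    rw [this, inv_mul_eq_div, div_lt_one sqrtpi_pos]
    have := integral_phi_Ioi_pos x
    linarith

lemma F_tendsto_one : Tendsto F atTop (𝓝 1) := by
  have h := intervalIntegral_tendsto_integral_Ioi (b := fun x : ℝ => x) (f := phi)
    (μ := volume) 0 phi_integrable.integrableOn tendsto_id
  rw [integral_phi_total] at h
  have := h.const_mul ((Real.sqrt π)⁻¹)
  simp only [inv_mul_cancel₀ sqrtpi_pos.ne'] at this
  refine Tendsto.congr (fun x => ?_) this
  rw [F_eq]

lemma one_sub_F {X : ℝ} (hX : 0 ≤ X) :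
    1 - F X = (Real.sqrt π)⁻¹ * ∫ s in Ioi X, phi s := by
  have hsplit : ∫ s in Ioi (0:ℝ), phi s = (∫ s in (0:ℝ)..X, phi s) + ∫ s in Ioi X, phi s :=
    split_Ioi phi_integrable hX
  rw [F_eq]
  have h1 : (1:ℝ) = (Real.sqrt π)⁻¹ * Real.sqrt π := (inv_mul_cancel₀ sqrtpi_pos.ne').symm
  rw [h1, ← mul_sub]
  congr 1
  rw [← integral_phi_total, hsplit]
  ring
lemma cont1 : Continuous (fun s : ℝ => s/2 * phi s) := by unfold phi; fun_prop
lemma cont2 (X : ℝ) : Continuous (fun s : ℝ => (X/2 - s/2) * phi s) := by unfold phi; fun_prop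
lemma cont3 (Y : ℝ) : Continuous (fun s : ℝ => (s/2 - Y/2) * phi s) := by unfold phi; fun_prop

lemma integral_sphi_interval {Y X : ℝ} :
    ∫ s in Y..X, s/2 * phi s = phi Y - phi X := by
  have h := intervalIntegral.integral_eq_sub_of_hasDerivAt
    (f := fun s => -phi s) (f' := fun s => s/2 * phi s) (a := Y) (b := X)
    (fun s _ => by have := (hasDerivAt_phi s).neg; rw [show -(-(s/2) * phi s) = s/2 * phi s by ring] at this; exact this)
    (cont1.intervalIntegrable Y X)
  rw [h]; ring

lemma keyK {X Y p q : ℝ} (hY : 0 ≤ Y) (hXY : Y < X) (hpq : p ≠ 0 ∨ q ≠ 0) :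
    (p^2 * (-(X/2) * phi X) - q^2 * (-(Y/2) * phi Y)) * (∫ s in Y..X, phi s)
      < (p * phi X - q * phi Y)^2 := by
  set A := phi X with hA
  set B := phi Y with hB
  set I := ∫ s in Y..X, phi s with hI
  have hApos : 0 < A := phi_pos X
  have hBpos : 0 < B := phi_pos Y
  have hIpos : 0 < I :=
    intervalIntegral_pos_of_pos_on (phi_intble Y X) (fun s _ => phi_pos s) hXY
  have i1 : B - A < X/2 * I := by
    have hpos : 0 < ∫ s in Y..X, (X/2 - s/2) * phi s := by
      apply intervalIntegral_pos_of_pos_on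
        ((cont2 X).intervalIntegrable Y X)
        (fun s hs => mul_pos (by simp only [sub_pos]; linarith [hs.2]) (phi_pos s)) hXY
    have heq : ∫ s in Y..X, (X/2 - s/2) * phi s = X/2 * I - (B - A) := by
      have h1 : (∫ s in Y..X, (X/2 - s/2) * phi s)
          = (∫ s in Y..X, X/2 * phi s) - ∫ s in Y..X, s/2 * phi s := by
        rw [← intervalIntegral.integral_sub (f := fun s => X/2 * phi s) ((continuous_const.mul phi_cont).intervalIntegrable Y X)
          (cont1.intervalIntegrable Y X)]
        congr 1; funext s; ring
      rw [h1, intervalIntegral.integral_const_mul, integral_sphi_interval]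
    linarith
  have i2 : Y/2 * I ≤ B - A := by
    have hpos : 0 ≤ ∫ s in Y..X, (s/2 - Y/2) * phi s := by
      apply intervalIntegral.integral_nonneg hXY.le
      intro s hs
      exact mul_nonneg (by linarith [hs.1]) (phi_pos s).le
    have heq : ∫ s in Y..X, (s/2 - Y/2) * phi s = (B - A) - Y/2 * I := by
      have h1 : (∫ s in Y..X, (s/2 - Y/2) * phi s)
          = (∫ s in Y..X, s/2 * phi s) - ∫ s in Y..X, Y/2 * phi s := by
        rw [← intervalIntegral.integral_sub (g := fun s => Y/2 * phi s)
          (cont1.intervalIntegrable Y X)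
          ((continuous_const.mul phi_cont).intervalIntegrable Y X)]
        congr 1; funext s; ring
      rw [h1, intervalIntegral.integral_const_mul, integral_sphi_interval]
    linarith
  rcases eq_or_ne p 0 with hp | hp
  · have hq : q ≠ 0 := hpq.resolve_left (by simp [hp])
    have hq2 : 0 < q^2 * B := by positivity
    have key : Y/2 * I < B := by linarith
    have := mul_lt_mul_of_pos_left key hq2
    rw [hp]
    nlinarith
  · have hp2 : 0 < p^2 * A := by positivity
    have strict : p^2 * A * (B - A) < p^2 * A * (X/2 * I) := mul_lt_mul_of_pos_left i1 hp2
    nlinarith [mul_le_mul_of_nonneg_left i2 (by positivity : (0:ℝ) ≤ q^2 * B),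
      mul_nonneg (mul_nonneg (sq_nonneg (p-q)) hApos.le) hBpos.le]
lemma tail_lt {X : ℝ} (hX : 0 ≤ X) : X/2 * ∫ s in Ioi X, phi s < phi X := by
  have hs1 : ∫ s in Ioi X, phi s
      = (∫ s in X..(X+1), phi s) + ∫ s in Ioi (X+1), phi s :=
    split_Ioi phi_integrable (by linarith)
  have hs2 : ∫ s in Ioi X, s/2 * phi s
      = (∫ s in X..(X+1), s/2 * phi s) + ∫ s in Ioi (X+1), s/2 * phi s :=
    split_Ioi sphi_integrable (by linarith)
  have p1 : X/2 * ∫ s in X..(X+1), phi s < ∫ s in X..(X+1), s/2 * phi s := by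
    have hpos : 0 < ∫ s in X..(X+1), (s/2 - X/2) * phi s := by
      apply intervalIntegral_pos_of_pos_on ((cont3 X).intervalIntegrable _ _)
        (fun s hs => mul_pos (by simp only [sub_pos]; linarith [hs.1]) (phi_pos s)) (by linarith)
    have heq : (∫ s in X..(X+1), (s/2 - X/2) * phi s)
        = (∫ s in X..(X+1), s/2 * phi s) - ∫ s in X..(X+1), X/2 * phi s := by
      rw [← intervalIntegral.integral_sub (g := fun s => X/2 * phi s) (cont1.intervalIntegrable _ _)
        ((continuous_const.mul phi_cont).intervalIntegrable _ _)]
      congr 1; funext s; ring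
    rw [heq, intervalIntegral.integral_const_mul] at hpos
    linarith
  have p2 : X/2 * ∫ s in Ioi (X+1), phi s ≤ ∫ s in Ioi (X+1), s/2 * phi s := by
    rw [← MeasureTheory.integral_const_mul]
    apply setIntegral_mono_on ((phi_integrable.const_mul _).integrableOn)
      (sphi_integrable.integrableOn) measurableSet_Ioi
    intro s hs
    rw [Set.mem_Ioi] at hs
    exact mul_le_mul_of_nonneg_right (by linarith) (phi_pos s).le
  have := integral_sphi_Ioi X
  rw [hs2] at this
  rw [hs1]
  calc X/2 * ((∫ s in X..(X+1), phi s) + ∫ s in Ioi (X+1), phi s)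
      = X/2 * (∫ s in X..(X+1), phi s) + X/2 * ∫ s in Ioi (X+1), phi s := by ring
    _ < (∫ s in X..(X+1), s/2 * phi s) + ∫ s in Ioi (X+1), s/2 * phi s := by linarith
    _ = phi X := this

lemma P_convex : Convex ℝ {p : ℝ × ℝ | 0 ≤ p.2 ∧ p.2 < p.1} := by
  rintro x ⟨hx0, hx⟩ y ⟨hy0, hy⟩ a b ha hb hab
  have h1 : (a • x + b • y).1 = a * x.1 + b * y.1 := rfl
  have h2 : (a • x + b • y).2 = a * x.2 + b * y.2 := rfl
  constructor
  · show 0 ≤ (a • x + b • y).2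
    rw [h2]
    exact add_nonneg (mul_nonneg ha hx0) (mul_nonneg hb hy0)
  · show (a • x + b • y).2 < (a • x + b • y).1
    rw [h1, h2]
    rcases eq_or_lt_of_le ha with rfl | ha'
    · have hb1 : b = 1 := by linarith
      simpa [hb1] using hy
    · nlinarith [mul_le_mul_of_nonneg_left hy.le hb, mul_lt_mul_of_pos_left hx ha']

lemma lemA : StrictConvexOn ℝ {p : ℝ × ℝ | 0 ≤ p.2 ∧ p.2 < p.1}
    (fun p => -Real.log (F p.1 - F p.2)) := by
  refine ⟨P_convex, ?_⟩
  rintro x ⟨hx0, hx⟩ y ⟨hy0, hy⟩ hxy a b ha hb hab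
  set c : ℝ := (Real.sqrt π)⁻¹ with hc
  have hcpos : 0 < c := inv_pos.2 sqrtpi_pos
  set p := y.1 - x.1 with hp
  set q := y.2 - x.2 with hq
  have hpq : p ≠ 0 ∨ q ≠ 0 := by
    by_contra hcon
    push_neg at hcon
    apply hxy
    have e1 : x.1 = y.1 := by have := hcon.1; rw [hp] at this; linarith
    have e2 : x.2 = y.2 := by have := hcon.2; rw [hq] at this; linarith
    exact Prod.ext e1 e2
  set X : ℝ → ℝ := fun t => x.1 + t * p with hX
  set Y : ℝ → ℝ := fun t => x.2 + t * q with hYdef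
  have hXY : ∀ t ∈ Icc (0:ℝ) 1, 0 ≤ Y t ∧ Y t < X t := by
    rintro t ⟨ht0, ht1⟩
    constructor
    · have hYt : Y t = (1-t) * x.2 + t * y.2 := by rw [hYdef, hq]; ring
      rw [hYt]
      exact add_nonneg (mul_nonneg (by linarith) hx0) (mul_nonneg ht0 hy0)
    · have hXt : X t - Y t = (1-t) * (x.1 - x.2) + t * (y.1 - y.2) := by
        rw [hX, hYdef, hp, hq]; ring
      have hlt : 0 < X t - Y t := by
        rcases eq_or_lt_of_le ht1 with rfl | ht1'
        · rw [hXt]; simpa using hy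
        · rw [hXt]
          have := mul_pos (by linarith : (0:ℝ) < 1 - t) (sub_pos.2 hx)
          nlinarith [mul_nonneg ht0 (sub_pos.2 hy).le]
      linarith
  set h : ℝ → ℝ := fun t => F (X t) - F (Y t) with hh
  have hXc : Continuous X := by rw [hX]; fun_prop
  have hYc : Continuous Y := by rw [hYdef]; fun_prop
  have hcont : Continuous h := (F_continuous.comp hXc).sub (F_continuous.comp hYc)
  have hposh : ∀ t ∈ Icc (0:ℝ) 1, 0 < h t := fun t ht => sub_pos.2 (F_strictMono (hXY t ht).2)
  set U : Set ℝ := {t | 0 < h t} with hU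
  have hUopen : IsOpen U := isOpen_lt continuous_const hcont
  have hIccU : Icc (0:ℝ) 1 ⊆ U := fun t ht => hposh t ht
  have hXd : ∀ t : ℝ, HasDerivAt X p t := fun t =>
    (hasDerivAt_mul_const p).const_add x.1
  have hYd : ∀ t : ℝ, HasDerivAt Y q t := fun t =>
    (hasDerivAt_mul_const q).const_add x.2
  set h1 : ℝ → ℝ := fun t => c * (p * phi (X t) - q * phi (Y t)) with hh1
  have hder : ∀ t : ℝ, HasDerivAt h (h1 t) t := by
    intro t
    have d1 : HasDerivAt (fun t => F (X t)) (c * phi (X t) * p) t :=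
      (hasDerivAt_F (X t)).comp t (hXd t)
    have d2 : HasDerivAt (fun t => F (Y t)) (c * phi (Y t) * q) t :=
      (hasDerivAt_F (Y t)).comp t (hYd t)
    have := d1.sub d2
    have heq : c * phi (X t) * p - c * phi (Y t) * q = h1 t := by rw [hh1]; ring
    rw [heq] at this
    exact this
  set γ : ℝ → ℝ := fun t => -Real.log (h t) with hγ
  have hdγ : ∀ t ∈ U, HasDerivAt γ (-(h1 t / h t)) t := fun t ht =>
    ((hder t).log (ne_of_gt ht)).neg
  have hd1 : Set.EqOn (deriv γ) (fun t => -(h1 t / h t)) U :=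
    deriv_eqOn hUopen (fun t ht => (hdγ t ht).hasDerivWithinAt)
  have hkey : ∀ t ∈ interior (Icc (0:ℝ) 1), 0 < deriv^[2] γ t := by
    rw [interior_Icc]
    intro t ht
    have htIcc : t ∈ Icc (0:ℝ) 1 := Ioo_subset_Icc_self ht
    have htU : t ∈ U := hIccU htIcc
    set h2v : ℝ := c * (p^2 * (-(X t/2) * phi (X t)) - q^2 * (-(Y t/2) * phi (Y t))) with hh2v
    have h2val : HasDerivAt h1 h2v t := by
      have dX : HasDerivAt (fun t => phi (X t)) (-(X t/2) * phi (X t) * p) t :=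
        (hasDerivAt_phi (X t)).comp t (hXd t)
      have dY : HasDerivAt (fun t => phi (Y t)) (-(Y t/2) * phi (Y t) * q) t :=
        (hasDerivAt_phi (Y t)).comp t (hYd t)
      have := ((dX.const_mul p).sub (dY.const_mul q)).const_mul c
      have heq : c * (p * (-(X t/2) * phi (X t) * p) - q * (-(Y t/2) * phi (Y t) * q)) = h2v := by
        rw [hh2v]; ring
      rw [heq] at this
      exact this
    have hdd : HasDerivAt (fun t => -(h1 t / h t)) ((h1 t^2 - h2v * h t) / h t^2) t := by
      have := (h2val.div (hder t) (ne_of_gt htU)).neg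
      have heq : -((h2v * h t - h1 t * h1 t) / h t^2) = (h1 t^2 - h2v * h t) / h t^2 := by
        rw [← neg_div]; congr 1; ring
      rw [heq] at this
      exact this
    have e1 : deriv^[2] γ t = (h1 t^2 - h2v * h t) / h t^2 := by
      show deriv (deriv γ) t = _
      have heven : deriv γ =ᶠ[nhds t] (fun t => -(h1 t / h t)) :=
        hd1.eventuallyEq_of_mem (hUopen.mem_nhds htU)
      rw [heven.deriv_eq]
      exact hdd.deriv
    rw [e1]
    have hhtpos : 0 < h t := htU
    apply div_pos ?_ (pow_pos hhtpos 2)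
    have hK := keyK (hXY t htIcc).1 (hXY t htIcc).2 hpq
    have hFsub : h t = c * ∫ s in Y t..X t, phi s := by rw [hh]; exact F_sub _ _
    calc (0:ℝ) < c^2 * ((p * phi (X t) - q * phi (Y t))^2
          - (p^2 * (-(X t/2) * phi (X t)) - q^2 * (-(Y t/2) * phi (Y t)))
            * ∫ s in Y t..X t, phi s) :=
        mul_pos (pow_pos hcpos 2) (sub_pos.2 hK)
      _ = h1 t^2 - h2v * h t := by rw [hh1, hh2v, hFsub]; ring
  have hsc : StrictConvexOn ℝ (Icc (0:ℝ) 1) γ :=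
    strictConvexOn_of_deriv2_pos (convex_Icc 0 1)
      (((hcont.continuousOn).log (fun t ht => (hposh t ht).ne')).neg) hkey
  have hres := hsc.2 (x := 0) ⟨le_rfl, zero_le_one⟩ (y := 1) ⟨zero_le_one, le_rfl⟩
    (by norm_num) ha hb hab
  simp only [smul_eq_mul, mul_zero, mul_one, zero_add] at hres
  have e0 : γ 0 = -Real.log (F x.1 - F x.2) := by simp [hγ, hh, hX, hYdef]
  have e1' : γ 1 = -Real.log (F y.1 - F y.2) := by
    simp only [hγ, hh, hX, hYdef, hp, hq, one_mul]
    norm_num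
  have eb : γ b = -Real.log (F (a • x + b • y).1 - F (a • x + b • y).2) := by
    have ha' : a = 1 - b := by linarith
    have c1 : (a • x + b • y).1 = X b := by
      show a * x.1 + b * y.1 = x.1 + b * p
      rw [hp, ha']; ring
    have c2 : (a • x + b • y).2 = Y b := by
      show a * x.2 + b * y.2 = x.2 + b * q
      rw [hq, ha']; ring
    rw [c1, c2]
  rw [e0, e1', eb] at hres
  simpa using hres

lemma lemB : StrictConvexOn ℝ (Set.Ici (0:ℝ)) (fun x => -Real.log (1 - F x)) := by
  set c : ℝ := (Real.sqrt π)⁻¹ with hc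
  have hcpos : 0 < c := inv_pos.2 sqrtpi_pos
  set h : ℝ → ℝ := fun x => 1 - F x with hh
  have hposh : ∀ x : ℝ, 0 < h x := fun x => sub_pos.2 (F_lt_one x)
  have hder : ∀ x : ℝ, HasDerivAt h (-(c * phi x)) x := fun x => (hasDerivAt_F x).const_sub 1
  set γ : ℝ → ℝ := fun x => -Real.log (h x) with hγ
  apply strictConvexOn_of_deriv2_pos (convex_Ici 0)
  · exact (((continuous_const.sub F_continuous)).continuousOn.log (fun x _ => (hposh x).ne')).neg
  · rw [interior_Ici]
    intro t ht
    rw [Set.mem_Ioi] at ht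
    have hd1 : deriv γ = fun x => c * phi x / h x := by
      funext x
      have := ((hder x).log (hposh x).ne').neg
      rw [show deriv γ x = _ from this.deriv]
      field_simp
    have hdd : HasDerivAt (fun x => c * phi x / h x)
        ((c * (-(t/2) * phi t) * h t - c * phi t * (-(c * phi t))) / h t^2) t :=
      (((hasDerivAt_phi t).const_mul c).div (hder t) (hposh t).ne')
    have e1 : deriv^[2] γ t = (c * (-(t/2) * phi t) * h t - c * phi t * (-(c * phi t))) / h t^2 := by
      show deriv (deriv γ) t = _
      rw [hd1]
      exact hdd.deriv
    rw [e1]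
    apply div_pos ?_ (pow_pos (hposh t) 2)
    have htail : t/2 * ∫ s in Ioi t, phi s < phi t := tail_lt ht.le
    have hhval : h t = c * ∫ s in Ioi t, phi s := one_sub_F ht.le
    rw [hhval]
    have hphit := phi_pos t
    have hstep : c * phi t * (t/2 * ∫ s in Ioi t, phi s) < c * phi t * phi t :=
      mul_lt_mul_of_pos_left htail (mul_pos hcpos hphit)
    nlinarith [hstep, mul_pos hcpos hphit]

lemma lemC : ConvexOn ℝ (Set.Ici (0:ℝ)) (fun x => -F x) := by
  set c : ℝ := (Real.sqrt π)⁻¹ with hc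
  have hcpos : 0 < c := inv_pos.2 sqrtpi_pos
  apply convexOn_of_hasDerivWithinAt2_nonneg (convex_Ici 0)
    (f' := fun x => -(c * phi x)) (f'' := fun x => -(c * (-(x/2) * phi x)))
    (F_continuous.neg.continuousOn)
  · intro x _
    exact ((hasDerivAt_F x).neg).hasDerivWithinAt
  · intro x _
    exact (((hasDerivAt_phi x).const_mul c).neg).hasDerivWithinAt
  · intro x hx
    rw [interior_Ici, Set.mem_Ioi] at hx
    have : -(c * (-(x/2) * phi x)) = c * (x/2) * phi x := by ring
    rw [this]
    exact (mul_pos (mul_pos hcpos (by linarith)) (phi_pos x)).le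
lemma extv {n : ℕ} (ξ : Fin n → ℝ) {i : ℕ} (h1 : 1 ≤ i) (h2 : i ≤ n) :
    ξ ⟨i - 1, by omega⟩ = _root_.ext n ξ i := by
  unfold _root_.ext
  rw [dif_pos (⟨h1, h2⟩ : 1 ≤ i ∧ i ≤ n)]

lemma ext_combo {n : ℕ} (x y : Fin n → ℝ) (p q : ℝ) (i : ℕ) :
    _root_.ext n (p • x + q • y) i = p * _root_.ext n x i + q * _root_.ext n y i := by
  unfold _root_.ext
  split
  · simp [Pi.add_apply, Pi.smul_apply, smul_eq_mul]
  · simp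

lemma ext_nonneg {n : ℕ} {ξ : Fin n → ℝ} (hξ : ξ ∈ OmegaBar n) (i : ℕ) :
    0 ≤ _root_.ext n ξ i := by
  unfold _root_.ext
  split
  · exact hξ.2 _
  · exact le_rfl

lemma ext_pair_lt {n : ℕ} {ξ : Fin n → ℝ} (hξ : ξ ∈ OmegaBar n) {i : ℕ}
    (h1 : 1 ≤ i) (h2 : i + 1 ≤ n) : _root_.ext n ξ (i+1) < _root_.ext n ξ i := by
  rw [← extv ξ h1 (by omega), ← extv ξ (by omega : 1 ≤ i + 1) h2]
  exact hξ.1 (by simp [Fin.mk_lt_mk]; omega)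

lemma OmegaBar_convex (n : ℕ) : Convex ℝ (OmegaBar n) := by
  rintro x ⟨hxa, hx0⟩ y ⟨hya, hy0⟩ p q hp hq hpq
  constructor
  · intro i j hij
    show p * x j + q * y j < p * x i + q * y i
    rcases eq_or_lt_of_le hp with rfl | hp'
    · have : q = 1 := by linarith
      simpa [this] using hya hij
    · nlinarith [mul_le_mul_of_nonneg_left (hya hij).le hq, mul_lt_mul_of_pos_left (hxa hij) hp']
  · intro i
    exact add_nonneg (mul_nonneg hp (hx0 i)) (mul_nonneg hq (hy0 i))

noncomputable def DN (n : ℕ) (a : ℕ → ℝ) (i : ℕ) (ξ : Fin n → ℝ) : ℝ :=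
  (if i = 0 then 1 else F (_root_.ext n ξ i / a i)) - F (_root_.ext n ξ (i + 1) / a i)

noncomputable def TlogN (n : ℕ) (u k a : ℕ → ℝ) (i : ℕ) (ξ : Fin n → ℝ) : ℝ :=
  -(k i * (u (i + 1) - u i) * Real.log (DN n a i ξ))

lemma ENeu_decomp (n : ℕ) (u k a d : ℕ → ℝ) (bN : ℝ) (ξ : Fin n → ℝ) :
    ENeu n u k a d bN ξ = (∑ i ∈ Finset.range n, TlogN n u k a i ξ)
      + k n * a n * bN * Real.sqrt Real.pi * F (_root_.ext n ξ n / a n)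
      + (1 / 4) * ∑ i ∈ Finset.Icc 1 n, d i * (_root_.ext n ξ i) ^ 2 := rfl

section facts

variable {n : ℕ} (hn : 1 ≤ n) {u k a d : ℕ → ℝ} {bN : ℝ}

lemma DN_pos (ha : ∀ i ≤ n, 0 < a i) {ξ : Fin n → ℝ} (hξ : ξ ∈ OmegaBar n)
    {i : ℕ} (hi : i < n) : 0 < DN n a i ξ := by
  rcases eq_or_ne i 0 with rfl | h0
  · simp only [DN, eq_self_iff_true, if_true, zero_add]
    have := F_lt_one (_root_.ext n ξ 1 / a 0)
    linarith
  · simp only [DN, if_neg h0]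
    have hlt := ext_pair_lt hξ (by omega : 1 ≤ i) (by omega)
    have hapos := ha i (by omega)
    exact sub_pos.2 (F_strictMono ((div_lt_div_iff_of_pos_right hapos).mpr hlt))

lemma DN_le_one (ha : ∀ i ≤ n, 0 < a i) {ξ : Fin n → ℝ} (hξ : ξ ∈ OmegaBar n)
    {i : ℕ} (hi : i < n) : DN n a i ξ ≤ 1 := by
  have hge : 0 ≤ F (_root_.ext n ξ (i+1) / a i) :=
    F_nonneg (div_nonneg (ext_nonneg hξ _) (ha i (by omega)).le)
  rcases eq_or_ne i 0 with rfl | h0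
  · simp only [DN, eq_self_iff_true, if_true, zero_add]
    rw [zero_add] at hge
    linarith
  · simp only [DN, if_neg h0]
    have := F_lt_one (_root_.ext n ξ i / a i)
    linarith

lemma TlogN_nonneg (hk : ∀ i ≤ n, 0 < k i) (ha : ∀ i ≤ n, 0 < a i)
    (hu0 : u 0 ≤ u 1) (hu : ∀ i, 1 ≤ i → i < n → u i < u (i + 1))
    {ξ : Fin n → ℝ} (hξ : ξ ∈ OmegaBar n) {i : ℕ} (hi : i < n) :
    0 ≤ TlogN n u k a i ξ := by
  have hlog : Real.log (DN n a i ξ) ≤ 0 :=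
    Real.log_nonpos (DN_pos ha hξ hi).le (DN_le_one ha hξ hi)
  have hcoef : 0 ≤ k i * (u (i+1) - u i) := by
    rcases eq_or_ne i 0 with rfl | h0
    · exact mul_nonneg (hk 0 (by omega)).le (by linarith)
    · exact mul_nonneg (hk i (by omega)).le (by linarith [hu i (by omega) hi])
  unfold TlogN
  nlinarith

end facts
lemma Tlog_le_pair {n : ℕ} {u k a : ℕ → ℝ} (hk : ∀ i ≤ n, 0 < k i) (ha : ∀ i ≤ n, 0 < a i)
    (hu : ∀ i, 1 ≤ i → i < n → u i < u (i + 1))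
    {x y : Fin n → ℝ} (hx : x ∈ OmegaBar n) (hy : y ∈ OmegaBar n)
    {p q : ℝ} (hp : 0 < p) (hq : 0 < q) (hpq : p + q = 1)
    {i : ℕ} (h1 : 1 ≤ i) (hi : i < n) :
    TlogN n u k a i (p • x + q • y) ≤ p * TlogN n u k a i x + q * TlogN n u k a i y ∧
    ((_root_.ext n x i, _root_.ext n x (i+1)) ≠ (_root_.ext n y i, _root_.ext n y (i+1)) →
      TlogN n u k a i (p • x + q • y) < p * TlogN n u k a i x + q * TlogN n u k a i y) := by
  set C := k i * (u (i+1) - u i) with hC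
  have hCpos : 0 < C := mul_pos (hk i hi.le) (sub_pos.2 (hu i h1 hi))
  have hai := ha i hi.le
  set ℓ : (Fin n → ℝ) → ℝ × ℝ :=
    fun ξ => (_root_.ext n ξ i / a i, _root_.ext n ξ (i+1) / a i) with hℓ
  have hmem : ∀ ξ ∈ OmegaBar n, ℓ ξ ∈ {pr : ℝ × ℝ | 0 ≤ pr.2 ∧ pr.2 < pr.1} := fun ξ hξ =>
    ⟨div_nonneg (ext_nonneg hξ _) hai.le,
      (div_lt_div_iff_of_pos_right hai).mpr (ext_pair_lt hξ h1 hi)⟩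
  have hcombo : ℓ (p • x + q • y) = p • ℓ x + q • ℓ y := by
    have e1 : (p • ℓ x + q • ℓ y).1 = p * (_root_.ext n x i / a i) + q * (_root_.ext n y i / a i) := rfl
    have e2 : (p • ℓ x + q • ℓ y).2
        = p * (_root_.ext n x (i+1) / a i) + q * (_root_.ext n y (i+1) / a i) := rfl
    apply Prod.ext
    · show _root_.ext n (p • x + q • y) i / a i = (p • ℓ x + q • ℓ y).1
      rw [e1, ext_combo]; ring
    · show _root_.ext n (p • x + q • y) (i+1) / a i = (p • ℓ x + q • ℓ y).2
      rw [e2, ext_combo]; ring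
  have hTeq : ∀ ξ : Fin n → ℝ, TlogN n u k a i ξ = C * (-Real.log (F (ℓ ξ).1 - F (ℓ ξ).2)) := by
    intro ξ
    unfold TlogN DN
    rw [if_neg (by omega : i ≠ 0)]
    ring
  constructor
  · have hcv := lemA.convexOn.2 (hmem x hx) (hmem y hy) hp.le hq.le hpq
    rw [← hcombo] at hcv
    rw [hTeq, hTeq, hTeq]
    simp only [smul_eq_mul] at hcv
    nlinarith [mul_le_mul_of_nonneg_left hcv hCpos.le]
  · intro hne
    have hℓne : ℓ x ≠ ℓ y := by
      intro he
      apply hne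
      have e1 : _root_.ext n x i / a i = _root_.ext n y i / a i := congrArg Prod.fst he
      have e2 : _root_.ext n x (i+1) / a i = _root_.ext n y (i+1) / a i := congrArg Prod.snd he
      have f1 : _root_.ext n x i = _root_.ext n y i := by
        field_simp at e1; exact e1
      have f2 : _root_.ext n x (i+1) = _root_.ext n y (i+1) := by
        field_simp at e2; exact e2
      rw [f1, f2]
    have hcv := lemA.2 (hmem x hx) (hmem y hy) hℓne hp hq hpq
    rw [← hcombo] at hcv
    rw [hTeq, hTeq, hTeq]
    simp only [smul_eq_mul] at hcv
    nlinarith [mul_lt_mul_of_pos_left hcv hCpos]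

lemma Tlog_le_zero {n : ℕ} (hn : 1 ≤ n) {u k a : ℕ → ℝ} (hk : ∀ i ≤ n, 0 < k i)
    (ha : ∀ i ≤ n, 0 < a i) (hu0 : u 0 ≤ u 1)
    {x y : Fin n → ℝ} (hx : x ∈ OmegaBar n) (hy : y ∈ OmegaBar n)
    {p q : ℝ} (hp : 0 < p) (hq : 0 < q) (hpq : p + q = 1) :
    TlogN n u k a 0 (p • x + q • y) ≤ p * TlogN n u k a 0 x + q * TlogN n u k a 0 y ∧
    (u 0 < u 1 → _root_.ext n x 1 ≠ _root_.ext n y 1 →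
      TlogN n u k a 0 (p • x + q • y) < p * TlogN n u k a 0 x + q * TlogN n u k a 0 y) := by
  set C := k 0 * (u 1 - u 0) with hC
  have hCnn : 0 ≤ C := mul_nonneg (hk 0 (by omega)).le (by linarith)
  have ha0 := ha 0 (by omega)
  set ℓ : (Fin n → ℝ) → ℝ := fun ξ => _root_.ext n ξ 1 / a 0 with hℓ
  have hmem : ∀ ξ ∈ OmegaBar n, ℓ ξ ∈ Set.Ici (0:ℝ) := fun ξ hξ =>
    div_nonneg (ext_nonneg hξ _) ha0.le
  have hcombo : ℓ (p • x + q • y) = p * ℓ x + q * ℓ y := by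
    show _root_.ext n (p • x + q • y) 1 / a 0 = _
    rw [ext_combo]; ring
  have hTeq : ∀ ξ : Fin n → ℝ, TlogN n u k a 0 ξ = C * (-Real.log (1 - F (ℓ ξ))) := by
    intro ξ
    unfold TlogN DN
    rw [if_pos rfl]
    simp only [zero_add]
    ring
  constructor
  · have hcv := lemB.convexOn.2 (hmem x hx) (hmem y hy) hp.le hq.le hpq
    simp only [smul_eq_mul] at hcv
    rw [← hcombo] at hcv
    rw [hTeq, hTeq, hTeq]
    nlinarith [mul_le_mul_of_nonneg_left hcv hCnn]
  · intro huu hne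
    have hCpos : 0 < C := mul_pos (hk 0 (by omega)) (by linarith)
    have hℓne : ℓ x ≠ ℓ y := by
      intro he
      apply hne
      rw [hℓ] at he
      field_simp at he
      exact he
    have hcv := lemB.2 (hmem x hx) (hmem y hy) hℓne hp hq hpq
    simp only [smul_eq_mul] at hcv
    rw [← hcombo] at hcv
    rw [hTeq, hTeq, hTeq]
    nlinarith [mul_lt_mul_of_pos_left hcv hCpos]

lemma Tb_le {n : ℕ} (hn : 1 ≤ n) {k a : ℕ → ℝ} {bN : ℝ} (hb : bN < 0)
    (hkn : 0 < k n) (han : 0 < a n)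
    {x y : Fin n → ℝ} (hx : x ∈ OmegaBar n) (hy : y ∈ OmegaBar n)
    {p q : ℝ} (hp : 0 < p) (hq : 0 < q) (hpq : p + q = 1) :
    k n * a n * bN * Real.sqrt Real.pi * F (_root_.ext n (p • x + q • y) n / a n)
      ≤ p * (k n * a n * bN * Real.sqrt Real.pi * F (_root_.ext n x n / a n))
        + q * (k n * a n * bN * Real.sqrt Real.pi * F (_root_.ext n y n / a n)) := by
  set κ := k n * a n * bN * Real.sqrt Real.pi with hκ
  have hκneg : κ < 0 :=
    mul_neg_of_neg_of_pos (mul_neg_of_pos_of_neg (by positivity) hb) sqrtpi_pos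
  have hmx : _root_.ext n x n / a n ∈ Set.Ici (0:ℝ) := div_nonneg (ext_nonneg hx _) han.le
  have hmy : _root_.ext n y n / a n ∈ Set.Ici (0:ℝ) := div_nonneg (ext_nonneg hy _) han.le
  have hcombo : _root_.ext n (p • x + q • y) n / a n
      = p * (_root_.ext n x n / a n) + q * (_root_.ext n y n / a n) := by
    rw [ext_combo]; ring
  have hcv := lemC.2 hmx hmy hp.le hq.le hpq
  simp only [smul_eq_mul] at hcv
  rw [← hcombo] at hcv
  nlinarith [mul_le_mul_of_nonneg_left hcv (neg_nonneg.2 hκneg.le)]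

lemma Tq_le {n : ℕ} {d : ℕ → ℝ} (hd : ∀ i, 1 ≤ i → i ≤ n → 0 ≤ d i)
    (x y : Fin n → ℝ) {p q : ℝ} (hp : 0 < p) (hq : 0 < q) (hpq : p + q = 1) :
    (1/4) * ∑ i ∈ Finset.Icc 1 n, d i * (_root_.ext n (p • x + q • y) i)^2
      ≤ p * ((1/4) * ∑ i ∈ Finset.Icc 1 n, d i * (_root_.ext n x i)^2)
        + q * ((1/4) * ∑ i ∈ Finset.Icc 1 n, d i * (_root_.ext n y i)^2) := by
  have key : ∀ i ∈ Finset.Icc 1 n, d i * (_root_.ext n (p • x + q • y) i)^2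
      ≤ p * (d i * (_root_.ext n x i)^2) + q * (d i * (_root_.ext n y i)^2) := by
    intro i hi
    rw [Finset.mem_Icc] at hi
    rw [ext_combo]
    have hdi := hd i hi.1 hi.2
    have hq' : q = 1 - p := by linarith
    subst hq'
    nlinarith [mul_nonneg (mul_nonneg hdi (mul_pos hp hq).le)
      (sq_nonneg (_root_.ext n x i - _root_.ext n y i))]
  have hsum := Finset.sum_le_sum key
  rw [Finset.sum_add_distrib, ← Finset.mul_sum, ← Finset.mul_sum] at hsum
  linarith
lemma ENeu_strictConvexOn (n : ℕ) (hn : 1 ≤ n) (u k a d : ℕ → ℝ) (bN : ℝ) (hb : bN < 0)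
    (hk : ∀ i ≤ n, 0 < k i) (ha : ∀ i ≤ n, 0 < a i) (hd : ∀ i, 1 ≤ i → i ≤ n → 0 ≤ d i)
    (hu0 : u 0 ≤ u 1) (hu : ∀ i, 1 ≤ i → i < n → u i < u (i + 1)) (hd1 : u 0 = u 1 → 0 < d 1) :
    StrictConvexOn ℝ (OmegaBar n) (ENeu n u k a d bN) := by
  refine ⟨OmegaBar_convex n, ?_⟩
  intro x hx y hy hxy p q hp hq hpq
  obtain ⟨j, hj⟩ : ∃ j, x j ≠ y j := Function.ne_iff.1 hxy
  simp only [smul_eq_mul]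
  have wlog : ∀ i ∈ Finset.range n, TlogN n u k a i (p • x + q • y)
      ≤ p * TlogN n u k a i x + q * TlogN n u k a i y := by
    intro i hi
    rw [Finset.mem_range] at hi
    rcases eq_or_ne i 0 with rfl | h0
    · exact (Tlog_le_zero hn hk ha hu0 hx hy hp hq hpq).1
    · exact (Tlog_le_pair hk ha hu hx hy hp hq hpq (by omega) hi).1
  have wb := Tb_le hn hb (hk n le_rfl) (ha n le_rfl) hx hy hp hq hpq
  have wq := Tq_le hd x y hp hq hpq
  have hextj : ∀ h : (j:ℕ) + 1 ≤ n, _root_.ext n x ((j:ℕ)+1) ≠ _root_.ext n y ((j:ℕ)+1) := by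
    intro h hcon
    apply hj
    rw [← extv x (by omega) h, ← extv y (by omega) h] at hcon
    simpa using hcon
  -- Case analysis on where strictness comes from
  by_cases hcase : n = 1 ∧ u 0 = u 1
  · -- quadratic term is strict
    obtain ⟨hn1, huu⟩ := hcase
    subst hn1
    have hd1' := hd1 huu
    have hj0 : j = ⟨0, by omega⟩ := Fin.ext (by have := j.isLt; omega)
    have sq : (1/4) * ∑ i ∈ Finset.Icc 1 1, d i * (_root_.ext 1 (p • x + q • y) i)^2
        < p * ((1/4) * ∑ i ∈ Finset.Icc 1 1, d i * (_root_.ext 1 x i)^2)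
          + q * ((1/4) * ∑ i ∈ Finset.Icc 1 1, d i * (_root_.ext 1 y i)^2) := by
      rw [Finset.Icc_self, Finset.sum_singleton, Finset.sum_singleton, Finset.sum_singleton,
        ext_combo]
      have hne : _root_.ext 1 x 1 ≠ _root_.ext 1 y 1 := by
        intro hcon
        apply hj
        rw [← extv x le_rfl le_rfl, ← extv y le_rfl le_rfl] at hcon
        rw [hj0]
        simpa using hcon
      have hq' : q = 1 - p := by linarith
      subst hq'
      have h1 : 0 < (_root_.ext 1 x 1 - _root_.ext 1 y 1)^2 :=
        lt_of_le_of_ne (sq_nonneg _) (Ne.symm (pow_ne_zero 2 (sub_ne_zero.2 hne)))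
      nlinarith [mul_pos (mul_pos hd1' (mul_pos hp hq)) h1]
    have hsum := Finset.sum_le_sum wlog
    rw [Finset.sum_add_distrib, ← Finset.mul_sum, ← Finset.mul_sum] at hsum
    rw [ENeu_decomp, ENeu_decomp, ENeu_decomp]
    nlinarith [hsum, wb, sq]
  · -- a log term is strict
    have hstrict : ∃ i0 ∈ Finset.range n, TlogN n u k a i0 (p • x + q • y)
        < p * TlogN n u k a i0 x + q * TlogN n u k a i0 y := by
      rcases eq_or_lt_of_le hn with h1 | h2
      · -- n = 1, u 0 < u 1
        have hn1 : n = 1 := h1.symm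
        subst hn1
        have huu : u 0 < u 1 := lt_of_le_of_ne hu0 (fun h => hcase ⟨rfl, h⟩)
        refine ⟨0, by simp, ?_⟩
        apply (Tlog_le_zero le_rfl hk ha hu0 hx hy hp hq hpq).2 huu
        have hj0 : j = ⟨0, by omega⟩ := Fin.ext (by have := j.isLt; omega)
        intro hcon
        apply hj
        rw [← extv x le_rfl le_rfl, ← extv y le_rfl le_rfl] at hcon
        rw [hj0]
        simpa using hcon
      · -- n ≥ 2
        set i0 : ℕ := if (j:ℕ) = 0 then 1 else (j:ℕ) with hi0
        have hji : (j:ℕ) < n := j.isLt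
        have hi01 : 1 ≤ i0 := by rw [hi0]; split <;> omega
        have hi0n : i0 < n := by
          rw [hi0]; split
          · omega
          · omega
        refine ⟨i0, Finset.mem_range.2 hi0n, ?_⟩
        apply (Tlog_le_pair hk ha hu hx hy hp hq hpq hi01 hi0n).2
        intro he
        have e1 : _root_.ext n x i0 = _root_.ext n y i0 := congrArg Prod.fst he
        have e2 : _root_.ext n x (i0+1) = _root_.ext n y (i0+1) := congrArg Prod.snd he
        apply hj
        rcases eq_or_ne ((j:ℕ)) 0 with hj0 | hj0
        · -- i0 = 1, j = ⟨0⟩, use first component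
          rw [hi0, if_pos hj0] at e1
          rw [← extv x le_rfl (by omega), ← extv y le_rfl (by omega)] at e1
          have : j = (⟨0, by omega⟩ : Fin n) := Fin.ext (by simpa using hj0)
          rw [this]
          simpa using e1
        · -- i0 = j, use second component
          rw [hi0, if_neg hj0] at e2
          rw [← extv x (by omega) (by omega), ← extv y (by omega) (by omega)] at e2
          have : j = (⟨(j:ℕ) + 1 - 1, by omega⟩ : Fin n) := Fin.ext (by simp)
          rw [this]
          exact e2
    obtain ⟨i0, hi0mem, hstr⟩ := hstrict
    have hsum := Finset.sum_lt_sum wlog ⟨i0, hi0mem, hstr⟩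
    rw [Finset.sum_add_distrib, ← Finset.mul_sum, ← Finset.mul_sum] at hsum
    rw [ENeu_decomp, ENeu_decomp, ENeu_decomp]
    nlinarith [hsum, wb, wq]
lemma ext_cont {n : ℕ} (i : ℕ) : Continuous (fun ξ : Fin n → ℝ => _root_.ext n ξ i) := by
  unfold _root_.ext
  by_cases h : 1 ≤ i ∧ i ≤ n
  · simp only [dif_pos h]
    exact continuous_apply _
  · simp only [dif_neg h]
    exact continuous_const

lemma DN_cont {n : ℕ} (a : ℕ → ℝ) (i : ℕ) : Continuous (DN n a i) := by
  unfold DN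
  apply Continuous.sub
  · by_cases h : i = 0
    · simp only [if_pos h]; exact continuous_const
    · simp only [if_neg h]
      exact F_continuous.comp ((ext_cont i).div_const _)
  · exact F_continuous.comp ((ext_cont (i+1)).div_const _)

lemma ENeu_continuousOn {n : ℕ} (hn : 1 ≤ n) {u k a d : ℕ → ℝ} {bN : ℝ}
    (ha : ∀ i ≤ n, 0 < a i) :
    ContinuousOn (ENeu n u k a d bN) (OmegaBar n) := by
  have h1 : ContinuousOn (fun ξ : Fin n → ℝ => ∑ i ∈ Finset.range n, TlogN n u k a i ξ)
      (OmegaBar n) := by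
    apply continuousOn_finset_sum
    intro i hi
    rw [Finset.mem_range] at hi
    unfold TlogN
    apply ContinuousOn.neg
    apply ContinuousOn.mul continuousOn_const
    exact ((DN_cont a i).continuousOn).log (fun ξ hξ => (DN_pos ha hξ hi).ne')
  have h2 : Continuous (fun ξ : Fin n → ℝ =>
      k n * a n * bN * Real.sqrt Real.pi * F (_root_.ext n ξ n / a n)) :=
    continuous_const.mul (F_continuous.comp ((ext_cont n).div_const _))
  have h3 : Continuous (fun ξ : Fin n → ℝ =>
      (1/4) * ∑ i ∈ Finset.Icc 1 n, d i * (_root_.ext n ξ i)^2) := by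
    apply continuous_const.mul
    apply continuous_finset_sum
    intro i _
    exact continuous_const.mul ((ext_cont i).pow 2)
  exact (h1.add h2.continuousOn).add h3.continuousOn

lemma ENeu_lower {n : ℕ} (hn : 1 ≤ n) {u k a d : ℕ → ℝ} {bN : ℝ} (hb : bN < 0)
    (hk : ∀ i ≤ n, 0 < k i) (ha : ∀ i ≤ n, 0 < a i) (hd : ∀ i, 1 ≤ i → i ≤ n → 0 ≤ d i)
    (hu0 : u 0 ≤ u 1) (hu : ∀ i, 1 ≤ i → i < n → u i < u (i + 1))
    {ξ : Fin n → ℝ} (hξ : ξ ∈ OmegaBar n) :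
    (∀ i ∈ Finset.range n, TlogN n u k a i ξ + k n * a n * bN * Real.sqrt Real.pi
      ≤ ENeu n u k a d bN ξ) ∧
    (1/4) * (d 1 * (_root_.ext n ξ 1)^2) + k n * a n * bN * Real.sqrt Real.pi
      ≤ ENeu n u k a d bN ξ := by
  set κ := k n * a n * bN * Real.sqrt Real.pi with hκ
  have hκneg : κ < 0 :=
    mul_neg_of_neg_of_pos (mul_neg_of_pos_of_neg (mul_pos (hk n le_rfl) (ha n le_rfl)) hb)
      sqrtpi_pos
  have hFmem : 0 ≤ F (_root_.ext n ξ n / a n) ∧ F (_root_.ext n ξ n / a n) ≤ 1 :=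
    ⟨F_nonneg (div_nonneg (ext_nonneg hξ _) (ha n le_rfl).le), (F_lt_one _).le⟩
  have hTb : κ ≤ κ * F (_root_.ext n ξ n / a n) := by nlinarith [hFmem.1, hFmem.2]
  have hTq0 : ∀ i ∈ Finset.Icc 1 n, 0 ≤ d i * (_root_.ext n ξ i)^2 := by
    intro i hi
    rw [Finset.mem_Icc] at hi
    exact mul_nonneg (hd i hi.1 hi.2) (sq_nonneg _)
  have hTqsum : 0 ≤ ∑ i ∈ Finset.Icc 1 n, d i * (_root_.ext n ξ i)^2 :=
    Finset.sum_nonneg hTq0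
  constructor
  · intro i hi
    have hsingle : TlogN n u k a i ξ ≤ ∑ j ∈ Finset.range n, TlogN n u k a j ξ :=
      Finset.single_le_sum (fun j hj => TlogN_nonneg hk ha hu0 hu hξ (Finset.mem_range.1 hj)) hi
    rw [ENeu_decomp, ← hκ]
    have : (0:ℝ) ≤ (1/4) * ∑ i ∈ Finset.Icc 1 n, d i * (_root_.ext n ξ i)^2 := by linarith
    linarith
  · have hsingle : d 1 * (_root_.ext n ξ 1)^2 ≤ ∑ i ∈ Finset.Icc 1 n, d i * (_root_.ext n ξ i)^2 :=
      Finset.single_le_sum hTq0 (by rw [Finset.mem_Icc]; omega)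
    have hTsum : 0 ≤ ∑ i ∈ Finset.range n, TlogN n u k a i ξ :=
      Finset.sum_nonneg (fun j hj => TlogN_nonneg hk ha hu0 hu hξ (Finset.mem_range.1 hj))
    rw [ENeu_decomp, ← hκ]
    linarith
lemma ENeu_sublevel_compact (n : ℕ) (hn : 1 ≤ n) (u k a d : ℕ → ℝ) (bN : ℝ) (hb : bN < 0)
    (hk : ∀ i ≤ n, 0 < k i) (ha : ∀ i ≤ n, 0 < a i) (hd : ∀ i, 1 ≤ i → i ≤ n → 0 ≤ d i)
    (hu0 : u 0 ≤ u 1) (hu : ∀ i, 1 ≤ i → i < n → u i < u (i + 1)) (hd1 : u 0 = u 1 → 0 < d 1)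
    (c : ℝ) :
    IsCompact {ξ | ξ ∈ OmegaBar n ∧ ENeu n u k a d bN ξ ≤ c} := by
  set E := ENeu n u k a d bN with hE
  set S := {ξ | ξ ∈ OmegaBar n ∧ E ξ ≤ c} with hS
  set κ := k n * a n * bN * Real.sqrt Real.pi with hκ
  have hbound : ∃ M : ℝ, 0 ≤ M ∧ ∀ ξ ∈ S, ∀ i : Fin n, ξ i ≤ M := by
    have key : ∃ M : ℝ, 0 ≤ M ∧ ∀ ξ ∈ S, _root_.ext n ξ 1 ≤ M := by
      rcases eq_or_lt_of_le hu0 with huu | huu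
      · have hd1' := hd1 huu
        refine ⟨Real.sqrt (4 * (c - κ) / d 1), Real.sqrt_nonneg _, ?_⟩
        rintro ξ ⟨hξΩ, hξc⟩
        have hlb := (ENeu_lower hn hb hk ha hd hu0 hu hξΩ).2
        rw [← hκ, ← hE] at hlb
        have h2 : (_root_.ext n ξ 1)^2 ≤ 4 * (c - κ) / d 1 := by
          rw [le_div_iff₀ hd1']
          nlinarith
        exact (Real.le_sqrt (ext_nonneg hξΩ 1) (le_trans (sq_nonneg _) h2)).2 h2
      · have hC0 : 0 < k 0 * (u 1 - u 0) := mul_pos (hk 0 (by omega)) (by linarith)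
        set ε := Real.exp (-((c - κ) / (k 0 * (u 1 - u 0)))) with hε
        have hεpos : 0 < ε := Real.exp_pos _
        have hev : ∀ᶠ z in atTop, 1 - ε < F z :=
          F_tendsto_one.eventually (eventually_gt_nhds (by linarith))
        obtain ⟨R0, hR0⟩ := eventually_atTop.1 hev
        refine ⟨max (a 0 * R0) 0, le_max_right _ _, ?_⟩
        rintro ξ ⟨hξΩ, hξc⟩
        have hlb := (ENeu_lower hn hb hk ha hd hu0 hu hξΩ).1 0 (Finset.mem_range.2 (by omega))
        rw [← hκ, ← hE] at hlb
        have hT0 : TlogN n u k a 0 ξ ≤ c - κ := by linarith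
        have hDpos : 0 < DN n a 0 ξ := DN_pos ha hξΩ (by omega)
        have hlog : -((c - κ)/(k 0 * (u 1 - u 0))) ≤ Real.log (DN n a 0 ξ) := by
          unfold TlogN at hT0
          rw [← neg_div, div_le_iff₀ hC0]
          nlinarith [hT0]
        have hD : ε ≤ DN n a 0 ξ := by
          calc ε ≤ Real.exp (Real.log (DN n a 0 ξ)) := Real.exp_le_exp.2 hlog
            _ = DN n a 0 ξ := Real.exp_log hDpos
        have hDeq : DN n a 0 ξ = 1 - F (_root_.ext n ξ 1 / a 0) := by
          unfold DN
          rw [if_pos rfl]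
        have hFle : F (_root_.ext n ξ 1 / a 0) ≤ 1 - ε := by
          rw [hDeq] at hD; linarith
        have hlt : _root_.ext n ξ 1 / a 0 < R0 := by
          by_contra hge
          push_neg at hge
          exact absurd hFle (not_le.2 (by linarith [hR0 _ hge]))
        have ha0 := ha 0 (by omega)
        have hfin : _root_.ext n ξ 1 ≤ a 0 * R0 := by
          rw [div_lt_iff₀ ha0] at hlt
          nlinarith
        exact le_trans hfin (le_max_left _ _)
    obtain ⟨M, hM0, hM⟩ := key
    refine ⟨M, hM0, ?_⟩
    rintro ξ hξS i
    have h1 : ξ i ≤ ξ ⟨0, by omega⟩ := by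
      rcases eq_or_ne i ⟨0, by omega⟩ with rfl | hne
      · exact le_rfl
      · refine (hξS.1.1 (lt_of_le_of_ne ?_ (Ne.symm hne))).le
        simp [Fin.le_def]
    have h2 : ξ ⟨0, by omega⟩ = _root_.ext n ξ 1 := extv ξ le_rfl hn
    rw [h2] at h1
    exact le_trans h1 (hM ξ hξS)
  obtain ⟨M, hM0, hM⟩ := hbound
  have hbdd : Bornology.IsBounded S := by
    apply (Metric.isBounded_iff_subset_closedBall 0).2
    refine ⟨M, fun ξ hξS => ?_⟩
    rw [Metric.mem_closedBall, dist_zero_right]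
    rw [pi_norm_le_iff_of_nonneg hM0]
    intro i
    rw [Real.norm_eq_abs, abs_le]
    exact ⟨by linarith [hξS.1.2 i], hM ξ hξS i⟩
  have hclosed : IsClosed S := by
    rw [← isSeqClosed_iff_isClosed]
    intro f L hf hfL
    have hcoord : ∀ i : Fin n, Tendsto (fun m => f m i) atTop (𝓝 (L i)) := fun i =>
      ((continuous_apply i).tendsto L).comp hfL
    have hL0 : ∀ i, 0 ≤ L i := fun i =>
      ge_of_tendsto (hcoord i) (Eventually.of_forall fun m => (hf m).1.2 i)
    have hLanti : ∀ i j : Fin n, i ≤ j → L j ≤ L i := by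
      intro i j hij
      rcases eq_or_lt_of_le hij with rfl | hlt
      · exact le_rfl
      · exact le_of_tendsto_of_tendsto' (hcoord j) (hcoord i) (fun m => ((hf m).1.1 hlt).le)
    have hconsec : ∀ m : ℕ, 1 ≤ m → m + 1 ≤ n → _root_.ext n L (m+1) < _root_.ext n L m := by
      intro m hm1 hm
      have hle : _root_.ext n L (m+1) ≤ _root_.ext n L m := by
        rw [← extv L hm1 (by omega), ← extv L (by omega) hm]
        apply hLanti
        rw [Fin.le_def]
        exact Nat.sub_le m 1
      rcases lt_or_eq_of_le hle with h | heq
      · exact h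
      exfalso
      have hDlim : Tendsto (fun j => DN n a m (f j)) atTop (𝓝 0) := by
        have hc := ((DN_cont a m).tendsto L).comp hfL
        have hz : DN n a m L = 0 := by
          unfold DN
          rw [if_neg (by omega : m ≠ 0), heq, sub_self]
        rwa [hz] at hc
      have hDpos : ∀ j, 0 < DN n a m (f j) := fun j => DN_pos ha (hf j).1 (by omega)
      have hloglim : Tendsto (fun j => Real.log (DN n a m (f j))) atTop atBot :=
        Real.tendsto_log_nhdsGT_zero.comp
          (tendsto_nhdsWithin_of_tendsto_nhds_of_eventually_within _ hDlim
            (Eventually.of_forall fun j => hDpos j))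
      have hC : 0 < k m * (u (m+1) - u m) :=
        mul_pos (hk m (by omega)) (sub_pos.2 (hu m hm1 (by omega)))
      have hTlim : Tendsto (fun j => TlogN n u k a m (f j)) atTop atTop := by
        have h1 : Tendsto (fun j => k m * (u (m+1) - u m) * Real.log (DN n a m (f j)))
            atTop atBot := hloglim.const_mul_atBot hC
        unfold TlogN
        exact tendsto_neg_atBot_atTop.comp h1
      have hbnd : ∀ j, TlogN n u k a m (f j) ≤ c - κ := by
        intro j
        have hl := (ENeu_lower hn hb hk ha hd hu0 hu (hf j).1).1 m (Finset.mem_range.2 (by omega))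
        rw [← hκ, ← hE] at hl
        linarith [(hf j).2]
      obtain ⟨j, hj⟩ := (hTlim.eventually_gt_atTop (c - κ)).exists
      exact absurd (hbnd j) (not_le.2 hj)
    have hLΩ : L ∈ OmegaBar n := by
      constructor
      · intro i j hij
        have hjlt := j.isLt
        have hilt : (i:ℕ) < (j:ℕ) := hij
        have h1 : L j ≤ L ⟨(i:ℕ) + 1, by omega⟩ := by
          apply hLanti
          rw [Fin.le_def]
          exact Nat.succ_le_of_lt hilt
        have h2 := hconsec ((i:ℕ) + 1) (by omega) (by omega)
        rw [← extv L (by omega) (by omega), ← extv L (by omega) (by omega)] at h2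
        have h3 : (⟨(i:ℕ) + 1 - 1, by omega⟩ : Fin n) = i := Fin.ext (by simp)
        rw [h3] at h2
        exact lt_of_le_of_lt (by exact h1) h2
      · exact hL0
    have hEL : Tendsto (fun m => E (f m)) atTop (𝓝 (E L)) := by
      have hwithin : Tendsto f atTop (𝓝[OmegaBar n] L) :=
        tendsto_nhdsWithin_of_tendsto_nhds_of_eventually_within f hfL
          (Eventually.of_forall fun m => (hf m).1)
      exact ((ENeu_continuousOn hn ha L hLΩ).tendsto).comp hwithin
    exact ⟨hLΩ, le_of_tendsto hEL (Eventually.of_forall fun m => (hf m).2)⟩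
  exact Metric.isCompact_of_isClosed_isBounded hclosed hbdd
theorem ENeu_strictConvex_coercive (n : ℕ) (hn : 1 ≤ n) (u k a d : ℕ → ℝ) (bN : ℝ)
    (hb : bN < 0)
    (hk : ∀ i ≤ n, 0 < k i) (ha : ∀ i ≤ n, 0 < a i)
    (hd : ∀ i, 1 ≤ i → i ≤ n → 0 ≤ d i)
    (hu0 : u 0 ≤ u 1) (hu : ∀ i, 1 ≤ i → i < n → u i < u (i + 1))
    (hd1 : u 0 = u 1 → 0 < d 1) :
    StrictConvexOn ℝ (OmegaBar n) (ENeu n u k a d bN) ∧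
    (∀ c : ℝ, IsCompact {ξ | ξ ∈ OmegaBar n ∧ ENeu n u k a d bN ξ ≤ c}) ∧
    ∃! ξ, ξ ∈ OmegaBar n ∧ ∀ η ∈ OmegaBar n, ENeu n u k a d bN ξ ≤ ENeu n u k a d bN η := by
  have hconv := ENeu_strictConvexOn n hn u k a d bN hb hk ha hd hu0 hu hd1
  have hcpt := fun c => ENeu_sublevel_compact n hn u k a d bN hb hk ha hd hu0 hu hd1 c
  refine ⟨hconv, hcpt, ?_⟩
  have hne : ∃ ξ0, ξ0 ∈ OmegaBar n := by
    refine ⟨fun i => (n : ℝ) - 1 - (i : ℕ), ?_, ?_⟩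
    · intro i j hij
      show (n : ℝ) - 1 - (j:ℕ) < (n : ℝ) - 1 - (i:ℕ)
      have hlt : ((i:ℕ):ℝ) < ((j:ℕ):ℝ) := by exact_mod_cast hij
      linarith
    · intro i
      show (0:ℝ) ≤ (n : ℝ) - 1 - (i:ℕ)
      have h := i.isLt
      have hle : ((i:ℕ):ℝ) + 1 ≤ (n:ℝ) := by exact_mod_cast h
      linarith
  obtain ⟨ξ0, hξ0⟩ := hne
  set c0 := ENeu n u k a d bN ξ0 with hc0
  set S := {ξ | ξ ∈ OmegaBar n ∧ ENeu n u k a d bN ξ ≤ c0} with hS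
  have hSc : IsCompact S := hcpt c0
  have hSne : S.Nonempty := ⟨ξ0, hξ0, le_rfl⟩
  have hsub : S ⊆ OmegaBar n := fun ξ hξ => hξ.1
  obtain ⟨m, hmS, hmin⟩ := hSc.exists_isMinOn hSne ((ENeu_continuousOn hn ha).mono hsub)
  have hglobal : ∀ η ∈ OmegaBar n, ENeu n u k a d bN m ≤ ENeu n u k a d bN η := by
    intro η hη
    by_cases hc : ENeu n u k a d bN η ≤ c0
    · exact isMinOn_iff.1 hmin η ⟨hη, hc⟩
    · push_neg at hc
      exact le_trans (isMinOn_iff.1 hmin ξ0 ⟨hξ0, le_rfl⟩) hc.le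
  refine ⟨m, ⟨hmS.1, hglobal⟩, ?_⟩
  rintro η ⟨hηΩ, hηmin⟩
  by_contra hne2
  have hEeq : ENeu n u k a d bN η = ENeu n u k a d bN m :=
    le_antisymm (hηmin m hmS.1) (hglobal η hηΩ)
  have hmid : (1/2 : ℝ) • η + (1/2 : ℝ) • m ∈ OmegaBar n :=
    OmegaBar_convex n hηΩ hmS.1 (by norm_num) (by norm_num) (by norm_num)
  have hstrict := hconv.2 hηΩ hmS.1 hne2 (by norm_num : (0:ℝ) < 1/2)
    (by norm_num : (0:ℝ) < 1/2) (by norm_num)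
  have h2 := hηmin _ hmid
  simp only [smul_eq_mul] at hstrict
  rw [hEeq] at hstrict h2
  linarith
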